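/- arXiv:2208.06358 — 3 statements merged into one kernel-verified Lean document; each statement's English description precedes it below -/
import Mathlib

section
/- Let D be a strongly connected digraph and v ∈ V(D). For each integer i ≥ 0 let L_i^+ = {x ∈ V(D) : dist_D(v,x) = i} be the i-th out-BFS layer from v. Then χ⃗(D) ≤ 2·max_{i ≥ 0} χ⃗(D[L_i^+]). -/
/-- A digraph on vertex type `V` is modeled as an arc relation `A : V → V → Prop`.
`Induce A X` is the arc relation of the induced subdigraph `D[X]`. -/
def Induce {V : Type*} (A : V → V → Prop) (X : Set V) : V → V → Prop :=
  fun u v => u ∈ X ∧ v ∈ X ∧ A u v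

/-- `l` is (the vertex list of) a directed cycle: at least 2 vertices, consecutive
vertices joined by arcs, all vertices distinct, and an arc from the last vertex back
to the first. Its length (number of arcs) is `l.length`. -/
def IsDicycleList {V : Type*} (A : V → V → Prop) (l : List V) : Prop :=
  2 ≤ l.length ∧ l.Chain' A ∧ l.Nodup ∧
    ∃ x y, l.getLast? = some x ∧ l.head? = some y ∧ A x y

/-- The digraph has no directed cycle. -/
def AcyclicRel {V : Type*} (A : V → V → Prop) : Prop :=
  ¬ ∃ l : List V, IsDicycleList A l

/-- The dichromatic number: the least `k` such that the vertices can be colored with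
`k` colors so that each color class induces an acyclic subdigraph. -/
noncomputable def dichrom {V : Type*} (A : V → V → Prop) : ℕ :=
  sInf {k | ∃ f : V → Fin k, ∀ i, AcyclicRel (Induce A {v | f v = i})}

/-- `l` is a directed path from `x` to `y` (possibly of length zero, i.e. `l = [x]`).
Its length (number of arcs) is `l.length - 1`. -/
def IsDipathFromTo {V : Type*} (A : V → V → Prop) (x y : V) (l : List V) : Prop :=
  l.Chain' A ∧ l.Nodup ∧ l.head? = some x ∧ l.getLast? = some y

/-- Directed distance from `x` to `y`: length of a shortest directed path. -/
noncomputable def ddist {V : Type*} (A : V → V → Prop) (x y : V) : ℕ :=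
  sInf {n | ∃ l, IsDipathFromTo A x y l ∧ l.length = n + 1}

/-- The digraph is strongly connected. -/
def StronglyConnectedRel {V : Type*} (A : V → V → Prop) : Prop :=
  ∀ x y : V, ∃ l, IsDipathFromTo A x y l

/-- The induced subdigraph `D[X]` is strongly connected. -/
def StronglyConnectedOn {V : Type*} (A : V → V → Prop) (X : Set V) : Prop :=
  ∀ x ∈ X, ∀ y ∈ X, ∃ l, IsDipathFromTo (Induce A X) x y l

/-- `X` is a strongly connected component: a maximal nonempty set inducing a strongly
connected subdigraph. -/
def IsSCC {V : Type*} (A : V → V → Prop) (X : Set V) : Prop :=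
  X.Nonempty ∧ StronglyConnectedOn A X ∧
    ∀ Y : Set V, X ⊆ Y → StronglyConnectedOn A Y → Y = X

/-- The internal vertices of a path given as a vertex list. -/
def Internal {V : Type*} (l : List V) : List V := l.dropLast.tail

/-- `D = (V, A)` contains a subdivision of `F = (W, B)` in which the subdivision path
of each arc `(u,v)` has length (number of arcs) satisfying the predicate `len u v`:
there are pairwise distinct branch vertices `b w`, and for each arc of `F` a directed
path of positive length between the corresponding branch vertices, these paths being
pairwise internally disjoint and internally avoiding all branch vertices. -/
def IsSubdivisionWith {V W : Type*} (A : V → V → Prop) (B : W → W → Prop)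
    (len : W → W → ℕ → Prop) : Prop :=
  ∃ b : W → V, Function.Injective b ∧
  ∃ P : ∀ u v, B u v → List V,
    (∀ u v (h : B u v), IsDipathFromTo A (b u) (b v) (P u v h) ∧
      2 ≤ (P u v h).length ∧ len u v ((P u v h).length - 1)) ∧
    (∀ u v (h : B u v), ∀ x ∈ Internal (P u v h),
      (∀ w : W, x ≠ b w) ∧
      ∀ u' v' (h' : B u' v'), (u, v) ≠ (u', v') → x ∉ P u' v' h')

section Helpers
variable {V : Type*}

lemma acyclic_of_no_arc {A : V → V → Prop} (h : ∀ a b, ¬ A a b) : AcyclicRel A := by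
  rintro ⟨l, -, -, -, x, y, -, -, hxy⟩
  exact h x y hxy

lemma chain'_imp_mem {R S : V → V → Prop} :
    ∀ l : List V, (∀ a ∈ l, ∀ b ∈ l, R a b → S a b) → l.Chain' R → l.Chain' S
  | [], _, _ => List.isChain_nil
  | [_], _, _ => List.isChain_singleton _
  | a :: b :: t, h, hc => by
      simp only [List.Chain', List.isChain_cons_cons] at hc ⊢
      exact ⟨h a (by simp) b (by simp) hc.1,
        chain'_imp_mem (b :: t)
          (fun x hx y hy => h x (List.mem_cons_of_mem a hx) y (List.mem_cons_of_mem a hy)) hc.2⟩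

lemma cycle_imp {R S : V → V → Prop} {l : List V} (h : IsDicycleList R l)
    (himp : ∀ a ∈ l, ∀ b ∈ l, R a b → S a b) : IsDicycleList S l := by
  obtain ⟨h1, h2, h3, x, y, hx, hy, hxy⟩ := h
  exact ⟨h1, chain'_imp_mem l himp h2, h3, x, y, hx, hy,
    himp x (List.mem_of_mem_getLast? (hx ▸ rfl)) y (List.mem_of_mem_head? (hy ▸ rfl)) hxy⟩

lemma chain'_tail_mem {A : V → V → Prop} {X : Set V} :
    ∀ l : List V, l.Chain' (Induce A X) → ∀ x ∈ l.tail, x ∈ X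
  | [], _, x, hx => by simp at hx
  | [_], _, x, hx => by simp at hx
  | a :: b :: t, hc, x, hx => by
      simp only [List.Chain', List.isChain_cons_cons] at hc
      rcases List.mem_cons.1 hx with rfl | hx'
      · exact hc.1.2.1
      · exact chain'_tail_mem (b :: t) hc.2 x hx'

lemma cycle_members {A : V → V → Prop} {X : Set V} {l : List V}
    (h : IsDicycleList (Induce A X) l) : ∀ x ∈ l, x ∈ X := by
  obtain ⟨h1, h2, h3, x0, y0, hx0, hy0, hxy⟩ := h
  intro x hx
  obtain ⟨t, rfl⟩ : ∃ t, l = y0 :: t := by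
    cases l with
    | nil => simp at hy0
    | cons a t => exact ⟨t, by rw [show a = y0 by simpa using hy0]⟩
  rcases List.mem_cons.1 hx with rfl | hx'
  · exact hxy.2.1
  · exact chain'_tail_mem _ h2 x hx'

lemma cycle_induce {A : V → V → Prop} {X : Set V} {l : List V}
    (h : IsDicycleList A l) (hX : ∀ x ∈ l, x ∈ X) : IsDicycleList (Induce A X) l :=
  cycle_imp h (fun a ha b hb hab => ⟨hX a ha, hX b hb, hab⟩)

lemma ddist_set_nonempty {A : V → V → Prop} (hSC : StronglyConnectedRel A) (x y : V) :
    Set.Nonempty {n | ∃ l, IsDipathFromTo A x y l ∧ l.length = n + 1} := by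
  obtain ⟨l, hl⟩ := hSC x y
  have hne : l ≠ [] := by
    intro h; rw [h] at hl; simp [IsDipathFromTo] at hl
  have h1 : 1 ≤ l.length := List.length_pos_iff.2 hne
  exact ⟨l.length - 1, l, hl, by omega⟩

lemma ddist_spec {A : V → V → Prop} (hSC : StronglyConnectedRel A) (x y : V) :
    ∃ l, IsDipathFromTo A x y l ∧ l.length = ddist A x y + 1 :=
  Nat.sInf_mem (ddist_set_nonempty hSC x y)

lemma ddist_le {A : V → V → Prop} {x y : V} {n : ℕ}
    (h : ∃ l, IsDipathFromTo A x y l ∧ l.length = n + 1) : ddist A x y ≤ n :=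
  Nat.sInf_le h

lemma ddist_arc_le {A : V → V → Prop} (hSC : StronglyConnectedRel A) (v u w : V)
    (h : A u w) : ddist A v w ≤ ddist A v u + 1 := by
  obtain ⟨l, ⟨hch, hnd, hhd, hlst⟩, hlen⟩ := ddist_spec hSC v u
  by_cases hw : w ∈ l
  · obtain ⟨l₁, l₂, rfl⟩ := List.append_of_mem hw
    have hpre : l₁ ++ [w] <+: l₁ ++ w :: l₂ := ⟨l₂, by simp⟩
    have hle : ddist A v w ≤ l₁.length := by
      refine ddist_le ⟨l₁ ++ [w], ⟨hch.prefix hpre, hnd.sublist hpre.sublist, ?_, List.getLast?_concat⟩, by simp⟩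
      cases l₁ <;> simp_all
    have : l₁.length ≤ ddist A v u := by
      have := hlen; simp at this; omega
    omega
  · refine le_trans (ddist_le ⟨l ++ [w], ⟨?_, ?_, ?_, List.getLast?_concat⟩, by simp [hlen]⟩) le_rfl
    · refine List.isChain_append.2 ⟨hch, List.isChain_singleton _, ?_⟩
      intro a ha b hb
      rw [hlst] at ha
      simp at ha hb
      rwa [← ha, ← hb]
    · rw [List.nodup_append]
      refine ⟨hnd, List.nodup_singleton _, fun a ha b hb => ?_⟩
      simp at hb; subst hb; rintro rfl; exact hw ha
    · cases l <;> simp_all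

lemma card_mem_dichromSet [Fintype V] (A : V → V → Prop) :
    Fintype.card V ∈ {k | ∃ f : V → Fin k, ∀ i, AcyclicRel (Induce A {v | f v = i})} := by
  refine ⟨Fintype.equivFin V, fun i => ?_⟩
  rintro ⟨l, hlen, hch, hnd, -⟩
  match l, hlen with
  | a :: b :: t, _ =>
    simp only [List.Chain', List.isChain_cons_cons] at hch
    have h1 : Fintype.equivFin V a = i := hch.1.1
    have h2 : Fintype.equivFin V b = i := hch.1.2.1
    have : a = b := (Fintype.equivFin V).injective (h1.trans h2.symm)
    simp [this] at hnd

lemma dichrom_le_card [Fintype V] (A : V → V → Prop) : dichrom A ≤ Fintype.card V :=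
  Nat.sInf_le (card_mem_dichromSet A)

lemma one_le_dichrom [Fintype V] (A : V → V → Prop) (v : V) : 1 ≤ dichrom A := by
  rw [Nat.one_le_iff_ne_zero]
  intro h0
  have hmem := Nat.sInf_mem ⟨_, card_mem_dichromSet A⟩
  rw [show sInf {k | ∃ f : V → Fin k, ∀ i, AcyclicRel (Induce A {v | f v = i})} = dichrom A from rfl, h0] at hmem
  obtain ⟨f, -⟩ := hmem
  exact (f v).elim0

end Helpers

/-- Out-BFS layering bound on the dichromatic number. -/
theorem stmt_1 {V : Type*} [Fintype V] (A : V → V → Prop)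
    (hSC : StronglyConnectedRel A) (v : V) :
    dichrom A ≤ 2 * sSup {n | ∃ i : ℕ, n = dichrom (Induce A {x | ddist A v x = i})} := by
  classical
  set m := sSup {n | ∃ i : ℕ, n = dichrom (Induce A {x | ddist A v x = i})} with hm
  have hbdd : BddAbove {n | ∃ i : ℕ, n = dichrom (Induce A {x | ddist A v x = i})} :=
    ⟨Fintype.card V, by rintro n ⟨i, rfl⟩; exact dichrom_le_card _⟩
  have hle : ∀ i : ℕ, dichrom (Induce A {x | ddist A v x = i}) ≤ m :=
    fun i => le_csSup hbdd ⟨i, rfl⟩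
  have hm1 : 1 ≤ m := le_trans (one_le_dichrom _ v) (hle 0)
  have hcol : ∀ i : ℕ, ∃ g : V → Fin m, ∀ j,
      AcyclicRel (Induce (Induce A {x | ddist A v x = i}) {x | g x = j}) := by
    intro i
    have hne : ({k | ∃ f : V → Fin k, ∀ j,
        AcyclicRel (Induce (Induce A {x | ddist A v x = i}) {x | f x = j})} : Set ℕ).Nonempty :=
      ⟨_, card_mem_dichromSet (Induce A {x | ddist A v x = i})⟩
    obtain ⟨f0, hf0⟩ : ∃ f0 : V → Fin (dichrom (Induce A {x | ddist A v x = i})), ∀ j,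
        AcyclicRel (Induce (Induce A {x | ddist A v x = i}) {x | f0 x = j}) :=
      Nat.sInf_mem hne
    have hk : dichrom (Induce A {x | ddist A v x = i}) ≤ m := hle i
    refine ⟨fun x => Fin.castLE hk (f0 x), fun j => ?_⟩
    by_cases hj : (j : ℕ) < dichrom (Induce A {x | ddist A v x = i})
    · have hset : {x | Fin.castLE hk (f0 x) = j} = {x | f0 x = ⟨j, hj⟩} := by
        ext x; simp [Fin.ext_iff]
      rw [hset]; exact hf0 ⟨j, hj⟩
    · apply acyclic_of_no_arc
      intro a b hab
      exact hj (hab.1 ▸ (f0 a).isLt)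
  choose g hg using hcol
  have hmod2 : ∀ x : V, ddist A v x % 2 < 2 := fun x => Nat.mod_lt _ two_pos
  have hbound : ∀ x : V, (ddist A v x % 2) * m + ((g (ddist A v x) x : Fin m) : ℕ) < 2 * m := by
    intro x
    have h1 := hmod2 x
    have h2 := (g (ddist A v x) x).isLt
    have : ddist A v x % 2 = 0 ∨ ddist A v x % 2 = 1 := by omega
    rcases this with h | h <;> rw [h] <;> omega
  set F : V → Fin (2 * m) := fun x =>
    ⟨(ddist A v x % 2) * m + ((g (ddist A v x) x : Fin m) : ℕ), hbound x⟩ with hF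
  apply Nat.sInf_le
  refine ⟨F, fun c => ?_⟩
  rintro ⟨l, hcyc⟩
  have hFmem : ∀ x ∈ l, F x = c := cycle_members hcyc
  have hA : IsDicycleList A l := cycle_imp hcyc (fun a _ b _ hab => hab.2.2)
  have key : ∀ x ∈ l, ∀ y ∈ l, ddist A v x % 2 = ddist A v y % 2 ∧
      ((g (ddist A v x) x : Fin m) : ℕ) = ((g (ddist A v y) y : Fin m) : ℕ) := by
    intro x hx y hy
    have ex : (ddist A v x % 2) * m + ((g (ddist A v x) x : Fin m) : ℕ) = (c : ℕ) :=
      congrArg Fin.val (hFmem x hx)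
    have ey : (ddist A v y % 2) * m + ((g (ddist A v y) y : Fin m) : ℕ) = (c : ℕ) :=
      congrArg Fin.val (hFmem y hy)
    have t1 : ((g (ddist A v x) x : Fin m) : ℕ) < m := (g (ddist A v x) x).isLt
    have t2 : ((g (ddist A v y) y : Fin m) : ℕ) < m := (g (ddist A v y) y).isLt
    have p1 : ddist A v x % 2 = 0 ∨ ddist A v x % 2 = 1 := by have := hmod2 x; omega
    have p2 : ddist A v y % 2 = 0 ∨ ddist A v y % 2 = 1 := by have := hmod2 y; omega
    rcases p1 with h1 | h1 <;> rcases p2 with h2 | h2 <;>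
      rw [h1] at ex ⊢ <;> rw [h2] at ey ⊢ <;> omega
  have hmono : l.Chain' (fun a b => ddist A v b ≤ ddist A v a) := by
    refine chain'_imp_mem l ?_ hcyc.2.1
    intro a ha b hb hab
    have h1 : ddist A v b ≤ ddist A v a + 1 := ddist_arc_le hSC v a b hab.2.2
    have h2 := (key a ha b hb).1
    omega
  haveI : IsTrans V (fun a b => ddist A v b ≤ ddist A v a) :=
    ⟨fun _ _ _ h1 h2 => le_trans h2 h1⟩
  have hpw := List.isChain_iff_pairwise.1 hmono
  obtain ⟨hlen2, hch, hnd, x0, y0, hx0, hy0, hxy⟩ := hcyc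
  have hx0l : x0 ∈ l := List.mem_of_mem_getLast? (hx0 ▸ rfl)
  have hy0l : y0 ∈ l := List.mem_of_mem_head? (hy0 ▸ rfl)
  have hwrap : ddist A v y0 ≤ ddist A v x0 := by
    have h1 : ddist A v y0 ≤ ddist A v x0 + 1 := ddist_arc_le hSC v x0 y0 hxy.2.2
    have h2 := (key x0 hx0l y0 hy0l).1
    omega
  have hlne : l ≠ [] := by intro h; rw [h] at hy0; simp at hy0
  have hlast : l.getLast hlne = x0 := by
    rw [List.getLast?_eq_getLast hlne] at hx0; exact Option.some.inj hx0
  have hdecomp : l.dropLast ++ [x0] = l := by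
    rw [← hlast]; exact List.dropLast_append_getLast hlne
  have hheadall : ∀ x ∈ l, ddist A v x ≤ ddist A v y0 := by
    obtain ⟨t, rfl⟩ : ∃ t, l = y0 :: t := by
      cases l with
      | nil => simp at hy0
      | cons a t => exact ⟨t, by rw [show a = y0 by simpa using hy0]⟩
    intro x hx
    rcases List.mem_cons.1 hx with rfl | hx'
    · exact le_rfl
    · exact (List.pairwise_cons.1 hpw).1 x hx'
  have hlastall : ∀ x ∈ l, ddist A v x0 ≤ ddist A v x := by
    intro x hx
    rw [← hdecomp] at hpw hx
    rcases List.mem_append.1 hx with hx' | hx'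
    · exact (List.pairwise_append.1 hpw).2.2 x hx' x0 (by simp)
    · simp at hx'; subst hx'; exact le_rfl
  have hconst : ∀ x ∈ l, ddist A v x = ddist A v y0 := fun x hx =>
    le_antisymm (hheadall x hx) (hwrap.trans (hlastall x hx))
  have hin : ∀ x ∈ l, x ∈ {x | ddist A v x = ddist A v y0} := fun x hx => hconst x hx
  have hgj : ∀ x ∈ l, x ∈ {x | g (ddist A v y0) x = g (ddist A v y0) y0} := by
    intro x hx
    have h2 := (key x hx y0 hy0l).2
    have hdx := hconst x hx
    rw [hdx] at h2
    exact Fin.ext h2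
  exact hg (ddist A v y0) (g (ddist A v y0) y0) ⟨l, cycle_induce (cycle_induce hA hin) hgj⟩
end

section
/- Let D be a strongly connected digraph and v ∈ V(D). For each integer i ≥ 0 let L_i^- = {x ∈ V(D) : dist_D(x,v) = i} be the i-th in-BFS layer to v. Then χ⃗(D) ≤ 2·max_{i ≥ 0} χ⃗(D[L_i^-]). -/
section Aux

variable {V : Type*}

lemma path_ne_nil {A : V → V → Prop} {x y : V} {l : List V}
    (h : IsDipathFromTo A x y l) : l ≠ [] := by
  rintro rfl; simp [IsDipathFromTo] at h

lemma ddist_le_succ {A : V → V → Prop} (hSC : StronglyConnectedRel A) {u w : V} (v : V)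
    (huw : A u w) : ddist A u v ≤ ddist A w v + 1 := by
  obtain ⟨l, hl, hlen⟩ := ddist_spec hSC w v
  by_cases hu : u ∈ l
  · obtain ⟨s, t, rfl⟩ := List.append_of_mem hu
    have hlast : (u :: t).getLast? = some v := by
      have h2 := hl.2.2.2
      rw [List.getLast?_append] at h2
      cases hzz : (u :: t).getLast? with
      | none => simp at hzz
      | some z => rw [hzz] at h2; simp [Option.or] at h2; exact congrArg some h2
    have hpath : IsDipathFromTo A u v (u :: t) :=
      ⟨hl.1.suffix ⟨s, rfl⟩, hl.2.1.of_append_right, rfl, hlast⟩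
    have hmem : t.length ∈ {n | ∃ l, IsDipathFromTo A u v l ∧ l.length = n + 1} :=
      ⟨u :: t, hpath, by simp⟩
    have := Nat.sInf_le hmem
    have hls : (s ++ u :: t).length = s.length + t.length + 1 := by simp; omega
    unfold ddist at *; omega
  · have hch : (u :: l).Chain' A := by
      rw [List.Chain', List.isChain_cons]
      refine ⟨fun b hb => ?_, hl.1⟩
      rw [hl.2.2.1] at hb
      simp at hb; rwa [← hb]
    have hlast : (u :: l).getLast? = some v := by
      rw [show u :: l = [u] ++ l from rfl, List.getLast?_append, hl.2.2.2]; rfl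
    have hpath : IsDipathFromTo A u v (u :: l) :=
      ⟨hch, List.nodup_cons.mpr ⟨hu, hl.2.1⟩, rfl, hlast⟩
    have hmem : (ddist A w v + 1) ∈ {n | ∃ l, IsDipathFromTo A u v l ∧ l.length = n + 1} :=
      ⟨u :: l, hpath, by simp [hlen]⟩
    exact Nat.sInf_le hmem

lemma dichrom_exists [Fintype V] (A : V → V → Prop) :
    ∃ f : V → Fin (dichrom A), ∀ i, AcyclicRel (Induce A {v | f v = i}) :=
  Nat.sInf_mem ⟨Fintype.card V, card_mem_dichromSet A⟩

lemma mem_of_chain'_induce {A : V → V → Prop} {C : Set V} :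
    ∀ (l : List V), l.Chain' (Induce A C) → 2 ≤ l.length → ∀ z ∈ l, z ∈ C
  | [], _, h => by simp at h
  | [a], _, h => by simp at h
  | a :: b :: t, hc, _ => by
    intro z hz
    have hab : Induce A C a b := (List.isChain_cons_cons.mp hc).1
    rcases List.mem_cons.mp hz with rfl | hz'
    · exact hab.1
    cases t with
    | nil => simp at hz'; rw [hz']; exact hab.2.1
    | cons c t' =>
      exact mem_of_chain'_induce (b :: c :: t') (List.isChain_cons_cons.mp hc).2 (by simp) z hz'

end Aux

/-- In-BFS layering bound on the dichromatic number. -/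
theorem stmt_2 {V : Type*} [Fintype V] (A : V → V → Prop)
    (hSC : StronglyConnectedRel A) (v : V) :
    dichrom A ≤ 2 * sSup {n | ∃ i : ℕ, n = dichrom (Induce A {x | ddist A x v = i})} := by
  set S := {n | ∃ i : ℕ, n = dichrom (Induce A {x | ddist A x v = i})} with hS
  set M := sSup S with hM
  have hbdd : BddAbove S := ⟨Fintype.card V, by rintro n ⟨i, rfl⟩; exact dichrom_le_card _⟩
  have hdi : ∀ i : ℕ, dichrom (Induce A {x | ddist A x v = i}) ≤ M :=
    fun i => le_csSup hbdd ⟨i, rfl⟩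
  choose g hg using fun i : ℕ => dichrom_exists (Induce A {x | ddist A x v = i})
  set d : V → ℕ := fun x => ddist A x v with hd
  set f : V → Fin (2 * M) := fun x =>
    finProdFinEquiv (⟨d x % 2, by omega⟩, Fin.castLE (hdi (d x)) (g (d x) x)) with hf
  have step : ∀ z z' : V, f z = f z' → A z z' → d z ≤ d z' := by
    intro z z' hzz' hA
    have h1 : d z ≤ d z' + 1 := ddist_le_succ hSC v hA
    have h2 := finProdFinEquiv.injective hzz'
    have h3 : d z % 2 = d z' % 2 := congrArg (fun p => (p.1 : Fin 2).val) h2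
    omega
  have hval : ∀ z z' : V, f z = f z' → (g (d z) z).val = (g (d z') z').val := by
    intro z z' hzz'
    have h2 := finProdFinEquiv.injective hzz'
    exact congrArg (fun p => (p.2 : Fin M).val) h2
  have hmem2M : 2 * M ∈ {k | ∃ f : V → Fin k, ∀ i, AcyclicRel (Induce A {z | f z = i})} := by
    refine ⟨f, fun c => ?_⟩
    rintro ⟨l, hlen, hch, hnd, x, y, hx, hy, hxy⟩
    -- all vertices of l are in the color class
    have hC : ∀ z ∈ l, f z = c :=
      fun z hz => mem_of_chain'_induce l hch hlen z hz
    -- head decomposition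
    obtain ⟨l', rfl⟩ : ∃ l', l = y :: l' := by
      cases l with
      | nil => simp at hy
      | cons a t => simp at hy; exact ⟨t, by rw [hy]⟩
    set l := y :: l' with hl
    have hxl : x ∈ l := by
      rcases List.mem_getLast?_eq_getLast hx with ⟨h, rfl⟩
      exact List.getLast_mem h
    have hyl : y ∈ l := List.mem_cons_self
    -- d is nondecreasing along l
    have hchain : l.Chain' (fun a b => d a ≤ d b) :=
      hch.imp (fun a b h => step a b ((h.1 : f a = c).trans (h.2.1 : f b = c).symm) h.2.2)
    letI : IsTrans V (fun a b => d a ≤ d b) := ⟨fun a b c' hab hbc => le_trans hab hbc⟩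
    have hpw := List.isChain_iff_pairwise.mp hchain
    have hy_le : ∀ z ∈ l', d y ≤ d z := (List.pairwise_cons.mp hpw).1
    have hx_ge : ∀ z ∈ l, d z ≤ d x := by
      intro z hz
      have hdecomp := List.dropLast_append_getLast? x hx
      rw [← hdecomp] at hpw hz
      rcases List.mem_append.mp hz with h | h
      · exact (List.pairwise_append.mp hpw).2.2 z h x (List.mem_singleton_self x)
      · simp at h; rw [h]
    have hxy' : d x ≤ d y :=
      step x y ((hxy.1 : f x = c).trans (hxy.2.1 : f y = c).symm) hxy.2.2
    have hconst : ∀ z ∈ l, d z = d y := by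
      intro z hz
      have h1 : d z ≤ d x := hx_ge z hz
      rcases List.mem_cons.mp hz with rfl | h
      · rfl
      · have h2 : d y ≤ d z := hy_le z h
        omega
    have hgconst : ∀ z ∈ l, g (d y) z = g (d y) y := by
      intro z hz
      have hv := hval z y ((hC z hz).trans (hC y hyl).symm)
      rw [hconst z hz] at hv
      exact Fin.val_injective hv
    apply hg (d y) (g (d y) y)
    refine ⟨l, hlen, ?_, hnd, x, y, hx, hy,
      ⟨hgconst x hxl, hgconst y hyl, hconst x hxl, hconst y hyl, hxy.2.2⟩⟩
    rw [List.Chain', List.isChain_iff_getElem]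
    intro i hi
    have h := List.isChain_iff_getElem.mp hch i hi
    have m1 : l.get ⟨i, by omega⟩ ∈ l := l.get_mem _
    have m2 : l.get ⟨i + 1, by omega⟩ ∈ l := l.get_mem _
    exact ⟨hgconst _ m1, hgconst _ m2, hconst _ m1, hconst _ m2, h.2.2⟩
  calc dichrom A ≤ 2 * M := Nat.sInf_le hmem2M
    _ = 2 * sSup S := rfl
end

section
/- Let k ≥ 2 be an integer and D a digraph. If χ⃗(D) ≥ k, then D contains a directed cycle of length at least k. -/
section DFSAux

variable {V : Type*}

/-- Back-arc certificate: a directed path from `z` up to `u` of length `d u - d z`. -/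
def BP (A : V → V → Prop) (d : V → ℕ) (u z : V) : Prop :=
  d z < d u ∧ ∃ l : List V, l.Chain' A ∧ l.Nodup ∧ l.head? = some z ∧
    l.getLast? = some u ∧ l.length = d u - d z + 1

lemma BP_congr {A : V → V → Prop} {d d' : V → ℕ} {u z : V}
    (hu : d' u = d u) (hz : d' z = d z) (h : BP A d u z) : BP A d' u z := by
  obtain ⟨hlt, l, h1, h2, h3, h4, h5⟩ := h
  exact ⟨by omega, l, h1, h2, h3, h4, by omega⟩

lemma mem_of_getElem?' {l : List V} {n : ℕ} {a : V} (h : l[n]? = some a) : a ∈ l := by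
  rw [List.getElem?_eq_some_iff] at h; obtain ⟨h1, h2⟩ := h; subst h2; exact List.getElem_mem h1

lemma mem_of_getLast?' {l : List V} {a : V} (h : l.getLast? = some a) : a ∈ l := by
  obtain ⟨h1, h2⟩ := List.mem_getLast?_eq_getLast (x := a) h
  subst h2; exact List.getLast_mem h1

lemma explore [DecidableEq V] (A : V → V → Prop) :
    ∀ (n : ℕ) (S : Finset V), S.card ≤ n →
    ∀ (stack : List V) (w : V) (d : V → ℕ) (t : ℕ),
      stack.getLast? = some w →
      stack.Chain' A → stack.Nodup → (∀ x ∈ stack, x ∉ S) →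
      (∀ (j : ℕ) (x : V), stack[j]? = some x → d x = j) →
      ∃ (T : Finset V) (d' f : V → ℕ),
        T ⊆ S ∧
        (∀ x, x ∉ T → d' x = d x) ∧
        (∀ v ∈ T, t ≤ f v ∧ f v < t + T.card) ∧
        (∀ z ∈ S, A w z → z ∈ T) ∧
        (∀ u ∈ T, ∀ z, u ≠ z → A u z →
          (z ∈ T ∧ f z < f u) ∨ ((z ∈ T ∨ z ∈ stack) ∧ BP A d' u z) ∨
            (z ∉ S ∧ z ∉ stack)) := by
  intro n
  induction n with
  | zero =>
    intro S hcard stack w d t _ _ _ _ _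
    have hS : S = ∅ := Finset.card_eq_zero.1 (le_antisymm hcard (Nat.zero_le _))
    subst hS
    exact ⟨∅, d, fun _ => t, by simp, by simp, by simp, by simp, by simp⟩
  | succ n ih =>
    intro S hcard stack w d t hlast hch hnd hdisj hgrad
    by_cases hex : ∃ v ∈ S, A w v
    · obtain ⟨v, hvS, hwv⟩ := hex
      have hvstack : v ∉ stack := fun hv => hdisj v hv hvS
      -- first recursive call: explore the subtree of v
      have hlast₁ : (stack ++ [v]).getLast? = some v := List.getLast?_concat
      have hch₁ : (stack ++ [v]).Chain' A := by
        unfold List.Chain'; rw [List.isChain_append]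
        refine ⟨hch, List.isChain_singleton v, ?_⟩
        intro x hx y hy
        simp only [List.head?_cons, Option.mem_some_iff] at hy
        rw [hlast] at hx
        simp only [Option.mem_some_iff] at hx
        subst hx; subst hy; exact hwv
      have hnd₁ : (stack ++ [v]).Nodup := by
        rw [List.nodup_append]
        refine ⟨hnd, List.nodup_singleton v, ?_⟩
        intro x hx _ hx' hxy; subst hxy
        simp only [List.mem_singleton] at hx'
        subst hx'; exact hvstack hx
      have hdisj₁ : ∀ x ∈ stack ++ [v], x ∉ S.erase v := by
        intro x hx hx'
        have hx'' := Finset.mem_of_mem_erase hx'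
        rcases List.mem_append.1 hx with h | h
        · exact hdisj x h hx''
        · simp only [List.mem_singleton] at h; subst h
          exact (Finset.mem_erase.1 hx').1 rfl
      have hgrad₁ : ∀ (j : ℕ) (x : V), (stack ++ [v])[j]? = some x →
          Function.update d v stack.length x = j := by
        intro j x hjx
        rw [List.getElem?_append] at hjx
        by_cases hj : j < stack.length
        · rw [if_pos hj] at hjx
          have hxmem : x ∈ stack := mem_of_getElem?' hjx
          have hxv : x ≠ v := fun h => hvstack (h ▸ hxmem)
          rw [Function.update_of_ne hxv]
          exact hgrad j x hjx
        · rw [if_neg hj] at hjx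
          rcases Nat.lt_or_ge (j - stack.length) 1 with h1 | h1
          · have hj0 : j - stack.length = 0 := by omega
            rw [hj0] at hjx
            simp only [List.getElem?_cons_zero, Option.some.injEq] at hjx
            subst hjx
            rw [Function.update_self]; omega
          · have : ([v] : List V)[j - stack.length]? = none := by
              rw [List.getElem?_eq_none]; simpa using h1
            rw [this] at hjx; exact absurd hjx (by simp)
      have hcard₁ : (S.erase v).card ≤ n := by
        rw [Finset.card_erase_of_mem hvS]; omega
      obtain ⟨T₁, d₁, f₁, hT₁S, hd₁, hf₁, hclo₁, harc₁⟩ :=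
        ih (S.erase v) hcard₁ (stack ++ [v]) v (Function.update d v stack.length) t
          hlast₁ hch₁ hnd₁ hdisj₁ hgrad₁
      have hvT₁ : v ∉ T₁ := fun h => (Finset.mem_erase.1 (hT₁S h)).1 rfl
      have hT₁S' : ∀ x ∈ T₁, x ∈ S := fun x hx => Finset.mem_of_mem_erase (hT₁S hx)
      have hT₁stack : ∀ x ∈ stack, x ∉ T₁ := fun x hx hx' => hdisj x hx (hT₁S' x hx')
      -- second recursive call: continue exploring from w
      have hS₂sub : S \ insert v T₁ ⊆ S.erase v := by
        intro x hx
        rw [Finset.mem_sdiff] at hx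
        rw [Finset.mem_erase]
        exact ⟨fun h => hx.2 (h ▸ Finset.mem_insert_self v T₁), hx.1⟩
      have hcard₂ : (S \ insert v T₁).card ≤ n :=
        le_trans (Finset.card_le_card hS₂sub) hcard₁
      have hdisj₂ : ∀ x ∈ stack, x ∉ S \ insert v T₁ := fun x hx hx' =>
        hdisj x hx (Finset.mem_sdiff.1 hx').1
      have hgrad₂ : ∀ (j : ℕ) (x : V), stack[j]? = some x → d₁ x = j := by
        intro j x hjx
        have hxmem : x ∈ stack := mem_of_getElem?' hjx
        have hxT₁ : x ∉ T₁ := hT₁stack x hxmem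
        rw [hd₁ x hxT₁, Function.update_of_ne (fun h => hvstack (by rwa [h] at hxmem))]
        exact hgrad j x hjx
      obtain ⟨T₂, d₂, f₂, hT₂S, hd₂, hf₂, hclo₂, harc₂⟩ :=
        ih (S \ insert v T₁) hcard₂ stack w d₁ (t + T₁.card + 1)
          hlast hch hnd hdisj₂ hgrad₂
      have hT₂S' : ∀ x ∈ T₂, x ∈ S := fun x hx => (Finset.mem_sdiff.1 (hT₂S hx)).1
      have hvT₂ : v ∉ T₂ := fun h =>
        (Finset.mem_sdiff.1 (hT₂S h)).2 (Finset.mem_insert_self v T₁)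
      have hT₁T₂ : ∀ x, x ∈ T₁ → x ∉ T₂ := fun x hx hx' =>
        (Finset.mem_sdiff.1 (hT₂S hx')).2 (Finset.mem_insert_of_mem hx)
      have hT₂stack : ∀ x ∈ stack, x ∉ T₂ := fun x hx hx' => hdisj x hx (hT₂S' x hx')
      -- assemble
      have hvTT : v ∉ T₁ ∪ T₂ := by
        rw [Finset.mem_union]; rintro (h | h); exacts [hvT₁ h, hvT₂ h]
      have hcardT : (insert v (T₁ ∪ T₂)).card = T₁.card + T₂.card + 1 := by
        rw [Finset.card_insert_of_notMem hvTT,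
          Finset.card_union_of_disjoint (Finset.disjoint_left.2 hT₁T₂)]
      refine ⟨insert v (T₁ ∪ T₂), d₂,
        fun x => if x = v then t + T₁.card else if x ∈ T₂ then f₂ x else f₁ x,
        ?_, ?_, ?_, ?_, ?_⟩
      · -- T ⊆ S
        intro x hx
        rcases Finset.mem_insert.1 hx with rfl | hx
        · exact hvS
        · rcases Finset.mem_union.1 hx with hx | hx
          exacts [hT₁S' x hx, hT₂S' x hx]
      · -- d' = d off T
        intro x hx
        have hxv : x ≠ v := fun h => hx (h ▸ Finset.mem_insert_self _ _)
        have hx1 : x ∉ T₁ := fun h => hx (Finset.mem_insert_of_mem (Finset.mem_union_left _ h))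
        have hx2 : x ∉ T₂ := fun h => hx (Finset.mem_insert_of_mem (Finset.mem_union_right _ h))
        rw [hd₂ x hx2, hd₁ x hx1, Function.update_of_ne hxv]
      · -- f ranges
        intro x hx
        beta_reduce
        rw [hcardT]
        rcases Finset.mem_insert.1 hx with rfl | hx
        · rw [if_pos rfl]; omega
        · rcases Finset.mem_union.1 hx with hx | hx
          · have hxv : x ≠ v := fun h => hvT₁ (h ▸ hx)
            rw [if_neg hxv, if_neg (hT₁T₂ x hx)]
            have := hf₁ x hx; omega
          · have hxv : x ≠ v := fun h => hvT₂ (h ▸ hx)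
            rw [if_neg hxv, if_pos hx]
            have := hf₂ x hx; omega
      · -- closure for w
        intro z hz hwz
        by_cases hzv : z = v
        · exact hzv ▸ Finset.mem_insert_self _ _
        · by_cases hz1 : z ∈ T₁
          · exact Finset.mem_insert_of_mem (Finset.mem_union_left _ hz1)
          · have : z ∈ S \ insert v T₁ := by
              rw [Finset.mem_sdiff, Finset.mem_insert]
              exact ⟨hz, fun h => by tauto⟩
            exact Finset.mem_insert_of_mem (Finset.mem_union_right _ (hclo₂ z this hwz))
      · -- arc property
        intro u hu z hne hA
        beta_reduce
        have fval₁ : ∀ x ∈ T₁, (if x = v then t + T₁.card else if x ∈ T₂ then f₂ x else f₁ x) = f₁ x := by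
          intro x hx
          rw [if_neg (fun h => hvT₁ (by rwa [h] at hx)), if_neg (hT₁T₂ x hx)]
        have fval₂ : ∀ x ∈ T₂, (if x = v then t + T₁.card else if x ∈ T₂ then f₂ x else f₁ x) = f₂ x := by
          intro x hx
          rw [if_neg (fun h => hvT₂ (by rwa [h] at hx)), if_pos hx]
        rcases Finset.mem_insert.1 hu with huv | hu
        · -- u = v
          have hA' : A v z := by rwa [huv] at hA
          have hnez : z ≠ v := fun h => hne (by rw [huv, h])
          by_cases hzS : z ∈ S
          · have hz' : z ∈ S.erase v := Finset.mem_erase.2 ⟨hnez, hzS⟩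
            have hzT₁ : z ∈ T₁ := hclo₁ z hz' hA'
            left
            refine ⟨Finset.mem_insert_of_mem (Finset.mem_union_left _ hzT₁), ?_⟩
            rw [fval₁ z hzT₁, if_pos huv]
            exact (hf₁ z hzT₁).2
          · by_cases hzst : z ∈ stack
            · right; left
              refine ⟨Or.inr hzst, ?_⟩
              obtain ⟨j, hj⟩ := List.mem_iff_getElem?.1 hzst
              have hjlt : j < stack.length := by
                rw [List.getElem?_eq_some_iff] at hj; exact hj.1
              have hdz : d₂ z = j := by
                have hz2 : z ∉ T₂ := hT₂stack z hzst
                rw [hd₂ z hz2]; exact hgrad₂ j z hj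
              have hdv : d₂ u = stack.length := by
                rw [huv, hd₂ v hvT₂, hd₁ v hvT₁, Function.update_self]
              have hdropne : stack.drop j ≠ [] := by
                rw [← List.length_pos_iff, List.length_drop]; omega
              have hdroplast : (stack.drop j).getLast? = some w := by
                conv at hlast => rw [← List.take_append_drop j stack]
                rw [List.getLast?_append_of_ne_nil _ hdropne] at hlast
                exact hlast
              subst huv
              refine ⟨by omega, stack.drop j ++ [u], ?_, ?_, ?_, List.getLast?_concat, ?_⟩
              · unfold List.Chain'; rw [List.isChain_append]
                refine ⟨List.IsChain.drop hch j, List.isChain_singleton u, ?_⟩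
                intro x hx y hy
                simp only [List.head?_cons, Option.mem_some_iff] at hy
                rw [hdroplast] at hx
                simp only [Option.mem_some_iff] at hx
                subst hx; subst hy; exact hwv
              · rw [List.nodup_append]
                refine ⟨hnd.sublist (List.drop_sublist j stack), List.nodup_singleton u, ?_⟩
                intro x hx _ hx' hxy; subst hxy
                simp only [List.mem_singleton] at hx'
                subst hx'
                exact hvstack (List.mem_of_mem_drop hx)
              · rw [List.head?_append_of_ne_nil _ hdropne, List.head?_drop]
                exact hj
              · rw [List.length_append, List.length_drop]
                simp only [List.length_cons, List.length_nil]
                omega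
            · right; right; exact ⟨hzS, hzst⟩
        · rcases Finset.mem_union.1 hu with hu | hu
          · -- u ∈ T₁
            rcases harc₁ u hu z hne hA with ⟨hzT₁, hflt⟩ | ⟨hz, hbp⟩ | ⟨hz1, hz2⟩
            · left
              refine ⟨Finset.mem_insert_of_mem (Finset.mem_union_left _ hzT₁), ?_⟩
              rw [fval₁ z hzT₁, fval₁ u hu]; exact hflt
            · right; left
              have hzmem : z ∈ insert v (T₁ ∪ T₂) ∨ z ∈ stack := by
                rcases hz with hz | hz
                · exact Or.inl (Finset.mem_insert_of_mem (Finset.mem_union_left _ hz))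
                · rcases List.mem_append.1 hz with hz | hz
                  · exact Or.inr hz
                  · simp only [List.mem_singleton] at hz
                    exact Or.inl (hz ▸ Finset.mem_insert_self _ _)
              refine ⟨hzmem, BP_congr ?_ ?_ hbp⟩
              · exact hd₂ u (fun h => hT₁T₂ u hu h)
              · refine hd₂ z ?_
                rcases hz with hz | hz
                · exact hT₁T₂ z hz
                · rcases List.mem_append.1 hz with hz | hz
                  · exact hT₂stack z hz
                  · simp only [List.mem_singleton] at hz; exact hz ▸ hvT₂
            · have hz3 : z ≠ v := fun h => hz2 (by simp [h])
              have hz4 : z ∉ stack := fun h => hz2 (List.mem_append.2 (Or.inl h))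
              have hz5 : z ∉ S := fun h => hz1 (Finset.mem_erase.2 ⟨hz3, h⟩)
              right; right; exact ⟨hz5, hz4⟩
          · -- u ∈ T₂
            rcases harc₂ u hu z hne hA with ⟨hzT₂, hflt⟩ | ⟨hz, hbp⟩ | ⟨hz1, hz2⟩
            · left
              refine ⟨Finset.mem_insert_of_mem (Finset.mem_union_right _ hzT₂), ?_⟩
              rw [fval₂ z hzT₂, fval₂ u hu]; exact hflt
            · right; left
              refine ⟨?_, hbp⟩
              rcases hz with hz | hz
              · exact Or.inl (Finset.mem_insert_of_mem (Finset.mem_union_right _ hz))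
              · exact Or.inr hz
            · by_cases hzS : z ∈ S
              · have hz3 : z ∈ insert v T₁ := by
                  by_contra hzc
                  exact hz1 (Finset.mem_sdiff.2 ⟨hzS, hzc⟩)
                left
                have hfu : (if u = v then t + T₁.card else if u ∈ T₂ then f₂ u else f₁ u) = f₂ u :=
                  fval₂ u hu
                have hfu' := (hf₂ u hu).1
                rcases Finset.mem_insert.1 hz3 with rfl | hz3
                · refine ⟨Finset.mem_insert_self _ _, ?_⟩
                  rw [if_pos rfl, hfu]; omega
                · refine ⟨Finset.mem_insert_of_mem (Finset.mem_union_left _ hz3), ?_⟩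
                  rw [fval₁ z hz3, hfu]
                  have := (hf₁ z hz3).2; omega
              · right; right; exact ⟨hzS, hz2⟩
    · -- no fresh out-neighbour of w : base case
      push_neg at hex
      refine ⟨∅, d, fun _ => t, by simp, by simp, by simp, ?_, by simp⟩
      intro z hz hwz
      exact absurd hwz (hex z hz)

end DFSAux

section DFSAux2
variable {V : Type*}

lemma outer [DecidableEq V] (A : V → V → Prop) :
    ∀ (n : ℕ) (S : Finset V), S.card ≤ n →
    ∃ (d f : V → ℕ),
      (∀ v ∈ S, f v < S.card) ∧
      ∀ u ∈ S, ∀ z ∈ S, u ≠ z → A u z → f z < f u ∨ BP A d u z := by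
  intro n
  induction n with
  | zero =>
    intro S hcard
    have hS : S = ∅ := Finset.card_eq_zero.1 (le_antisymm hcard (Nat.zero_le _))
    subst hS
    exact ⟨fun _ => 0, fun _ => 0, by simp, by simp⟩
  | succ n ih =>
    intro S hcard
    rcases S.eq_empty_or_nonempty with rfl | ⟨w, hw⟩
    · exact ⟨fun _ => 0, fun _ => 0, by simp, by simp⟩
    · have hcard₁ : (S.erase w).card ≤ n := by
        rw [Finset.card_erase_of_mem hw]
        have : 1 ≤ S.card := Finset.card_pos.2 ⟨w, hw⟩
        omega
      have hgrad0 : ∀ (j : ℕ) (x : V), ([w] : List V)[j]? = some x → (fun _ : V => 0) x = j := by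
        intro j x hj
        rcases Nat.lt_or_ge j 1 with h1 | h1
        · interval_cases j
          · simp only [List.getElem?_cons_zero, Option.some.injEq] at hj; simp
        · have : ([w] : List V)[j]? = none := by
            rw [List.getElem?_eq_none]; simpa using h1
          rw [this] at hj; exact absurd hj (by simp)
      obtain ⟨T, d₁, f₁, hTS, hd₁, hf₁, hclo, harc⟩ :=
        explore A n (S.erase w) hcard₁ [w] w (fun _ => 0) 0
          rfl (List.isChain_singleton w) (List.nodup_singleton w)
          (by intro x hx; simp only [List.mem_singleton] at hx; subst hx
              exact fun h => (Finset.mem_erase.1 h).1 rfl)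
          hgrad0
      have hwT : w ∉ T := fun h => (Finset.mem_erase.1 (hTS h)).1 rfl
      have hTS' : ∀ x ∈ T, x ∈ S := fun x hx => Finset.mem_of_mem_erase (hTS hx)
      have hinsS : insert w T ⊆ S := by
        intro x hx
        rcases Finset.mem_insert.1 hx with rfl | hx
        exacts [hw, hTS' x hx]
      have hRsub : S \ insert w T ⊆ S.erase w := by
        intro x hx
        rw [Finset.mem_sdiff] at hx
        rw [Finset.mem_erase]
        exact ⟨fun h => hx.2 (h ▸ Finset.mem_insert_self w T), hx.1⟩
      have hcard₂ : (S \ insert w T).card ≤ n :=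
        le_trans (Finset.card_le_card hRsub) hcard₁
      obtain ⟨d₂, f₂, hf₂, harc₂⟩ := ih (S \ insert w T) hcard₂
      have hcards : (S \ insert w T).card + (insert w T).card = S.card :=
        Finset.card_sdiff_add_card_eq_card hinsS
      have hcardins : (insert w T).card = T.card + 1 := Finset.card_insert_of_notMem hwT
      refine ⟨fun x => if x ∈ insert w T then d₁ x else d₂ x,
        fun x => if x = w then T.card else if x ∈ T then f₁ x else T.card + 1 + f₂ x,
        ?_, ?_⟩
      · intro v hv
        beta_reduce
        by_cases hvw : v = w
        · rw [if_pos hvw]; omega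
        · rw [if_neg hvw]
          by_cases hvT : v ∈ T
          · rw [if_pos hvT]
            have := (hf₁ v hvT).2; omega
          · rw [if_neg hvT]
            have hvR : v ∈ S \ insert w T := by
              rw [Finset.mem_sdiff, Finset.mem_insert]
              exact ⟨hv, fun h => by tauto⟩
            have := hf₂ v hvR; omega
      · intro u hu z hz hne hA
        beta_reduce
        have fvT : ∀ x ∈ T, (if x = w then T.card else if x ∈ T then f₁ x else T.card + 1 + f₂ x) = f₁ x := by
          intro x hx
          rw [if_neg (fun h => hwT (by rwa [h] at hx)), if_pos hx]
        by_cases huw : u = w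
        · -- u = w
          have hz' : z ∈ S.erase w := Finset.mem_erase.2 ⟨fun h => hne (by rw [huw, h]), hz⟩
          have hzT : z ∈ T := hclo z hz' (by rwa [huw] at hA)
          left
          rw [fvT z hzT, if_pos huw]
          have := (hf₁ z hzT).2; omega
        · by_cases huT : u ∈ T
          · -- u ∈ T
            rcases harc u huT z hne hA with ⟨hzT, hflt⟩ | ⟨hzm, hbp⟩ | ⟨hz1, hz2⟩
            · left; rw [fvT z hzT, fvT u huT]; exact hflt
            · right
              have hzins : z ∈ insert w T := by
                rcases hzm with hzm | hzm
                · exact Finset.mem_insert_of_mem hzm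
                · simp only [List.mem_singleton] at hzm
                  rw [hzm]; exact Finset.mem_insert_self w T
              refine BP_congr ?_ ?_ hbp
              · rw [if_pos (Finset.mem_insert_of_mem huT)]
              · rw [if_pos hzins]
            · exfalso
              simp only [List.mem_singleton] at hz2
              exact hz1 (Finset.mem_erase.2 ⟨hz2, hz⟩)
          · -- u in the rest R
            have huR : u ∈ S \ insert w T := by
              rw [Finset.mem_sdiff, Finset.mem_insert]
              exact ⟨hu, fun h => by tauto⟩
            have hfu : (if u = w then T.card else if u ∈ T then f₁ u else T.card + 1 + f₂ u) = T.card + 1 + f₂ u := by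
              rw [if_neg huw, if_neg huT]
            by_cases hzR : z ∈ S \ insert w T
            · rcases harc₂ u huR z hzR hne hA with hflt | hbp
              · left
                have hzw : z ≠ w := fun h => (Finset.mem_sdiff.1 hzR).2 (by rw [h]; exact Finset.mem_insert_self w T)
                have hzT : z ∉ T := fun h => (Finset.mem_sdiff.1 hzR).2 (Finset.mem_insert_of_mem h)
                rw [hfu, if_neg hzw, if_neg hzT]
                omega
              · right
                have huins : u ∉ insert w T := (Finset.mem_sdiff.1 huR).2
                have hzins : z ∉ insert w T := (Finset.mem_sdiff.1 hzR).2
                refine BP_congr ?_ ?_ hbp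
                · rw [if_neg huins]
                · rw [if_neg hzins]
            · -- z ∈ insert w T, cross arc to earlier finished part
              left
              rw [hfu]
              have hzins : z ∈ insert w T := by
                rw [Finset.mem_sdiff] at hzR; push_neg at hzR
                exact hzR hz
              rcases Finset.mem_insert.1 hzins with rfl | hzT
              · rw [if_pos rfl]; omega
              · rw [fvT z hzT]
                have := (hf₁ z hzT).2; omega

lemma desc {P : V → V → Prop} {f : V → ℕ} (key : ∀ u z, u ≠ z → P u z → f z < f u) :
    ∀ l : List V, l.Chain' P → l.Nodup → ∀ y x, l.head? = some y → l.getLast? = some x →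
      f x ≤ f y := by
  intro l
  induction l with
  | nil => intro _ _ y x h; simp at h
  | cons a m ih =>
    intro hch hnd y x hy hx
    simp only [List.head?_cons, Option.some.injEq] at hy
    subst hy
    cases m with
    | nil =>
      simp only [List.getLast?_singleton, Option.some.injEq] at hx
      subst hx; exact le_rfl
    | cons b m' =>
      unfold List.Chain' at hch; rw [List.isChain_cons_cons] at hch
      rw [List.nodup_cons] at hnd
      have hab : a ≠ b := fun h => hnd.1 (h ▸ List.mem_cons_self (a := b) (l := m'))
      have h1 : f b < f a := key a b hab hch.1
      have h2 : f x ≤ f b := by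
        refine ih hch.2 hnd.2 b x rfl ?_
        rwa [List.getLast?_cons_cons] at hx
      omega

lemma head_ne_last {l : List V} (hnd : l.Nodup) (hlen : 2 ≤ l.length)
    {x y : V} (hy : l.head? = some y) (hx : l.getLast? = some x) : x ≠ y := by
  cases l with
  | nil => simp at hy
  | cons a m =>
    cases m with
    | nil => simp at hlen
    | cons b m' =>
      simp only [List.head?_cons, Option.some.injEq] at hy
      subst hy
      rw [List.getLast?_cons_cons] at hx
      have hxm : x ∈ b :: m' := mem_of_getLast?' hx
      rw [List.nodup_cons] at hnd
      exact fun h => hnd.1 (h ▸ hxm)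

end DFSAux2


/-- Dichromatic number at least `k ≥ 2` forces a directed cycle of length at least `k`. -/
theorem stmt_4 {V : Type*} [Fintype V] (A : V → V → Prop) (k : ℕ) (hk : 2 ≤ k)
    (h : k ≤ dichrom A) :
    ∃ l : List V, IsDicycleList A l ∧ k ≤ l.length := by
  classical
  by_contra hcon
  push_neg at hcon
  obtain ⟨d, f, -, harc⟩ := outer A (Finset.univ : Finset V).card Finset.univ le_rfl
  have hlpos : 0 < k - 1 := by omega
  set c : V → Fin (k - 1) := fun v => ⟨d v % (k - 1), Nat.mod_lt _ hlpos⟩ with hc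
  have key : ∀ u z : V, u ≠ z → A u z → d u % (k - 1) = d z % (k - 1) → f z < f u := by
    intro u z hne hA hmod
    rcases harc u (Finset.mem_univ u) z (Finset.mem_univ z) hne hA with hlt | ⟨hlt, l, hch, hnd, hhd, hlast, hlen⟩
    · exact hlt
    · exfalso
      have hcyc : IsDicycleList A l := ⟨by omega, hch, hnd, u, z, hlast, hhd, hA⟩
      have hshort := hcon l hcyc
      have hdvd : (k - 1) ∣ d u - d z :=
        (Nat.modEq_iff_dvd' (le_of_lt hlt)).1 (Nat.ModEq.symm hmod)
      have := Nat.le_of_dvd (by omega) hdvd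
      omega
  have hmem : (k - 1) ∈ {m | ∃ g : V → Fin m, ∀ i, AcyclicRel (Induce A {v | g v = i})} := by
    refine ⟨c, fun i => ?_⟩
    rintro ⟨l, hlen2, hch, hnd, x, y, hlast, hhd, hxy⟩
    obtain ⟨hxcls, hycls, hAxy⟩ := hxy
    have key' : ∀ u z, u ≠ z → Induce A {v | c v = i} u z → f z < f u := by
      rintro u z hne ⟨hu, hz, hA⟩
      apply key u z hne hA
      rw [Set.mem_setOf_eq] at hu hz
      have : c u = c z := by rw [hu, hz]
      exact congrArg Fin.val this
    have hle : f x ≤ f y := desc key' l hch hnd y x hhd hlast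
    have hxy' : x ≠ y := head_ne_last hnd hlen2 hhd hlast
    exact absurd hle (not_le.2 (key' x y hxy' ⟨hxcls, hycls, hAxy⟩))
  have hd : dichrom A ≤ k - 1 := by
    unfold dichrom
    exact Nat.sInf_le hmem
  omega
end
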